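/- Let D be a finite set of forbidden patterns and let m ≥ 1 be such that every pattern in D has length at most m. Then cap(D) > 0 if and only if there exists a finite word w over {−1, 0, +1} such that w has the word of m zeros as a prefix, w has the word (+1) followed by m−1 zeros as a suffix, and no element of D ∪ (−D) occurs as a contiguous subword (factor) of w. -/

import Mathlib

/-- The integer value of a binary symbol. -/
def boolToInt (b : Bool) : ℤ := if b then 1 else 0

/-- Componentwise difference of two binary words, a word over `{-1, 0, +1}`. -/
def diffWord (u v : List Bool) : List ℤ :=
  List.zipWith (fun a b => boolToInt a - boolToInt b) u v

/-- A forbidden pattern: a nonempty finite word over the alphabet `{-1, 0, +1}`. -/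
def IsPattern (p : List ℤ) : Prop :=
  p ≠ [] ∧ ∀ x ∈ p, x = -1 ∨ x = 0 ∨ x = 1

/-- A code `C` of binary words avoids the forbidden set `D` if no difference of two
distinct code words contains a pattern of `D` as a contiguous subword (factor). -/
def AvoidsCode (D : Finset (List ℤ)) (C : Finset (List Bool)) : Prop :=
  ∀ u ∈ C, ∀ v ∈ C, u ≠ v → ∀ p ∈ D, ¬ p <:+: diffWord u v

/-- `delta D n` : the maximal cardinality of a code of binary words of length `n`
avoiding the forbidden set `D`. -/
noncomputable def delta (D : Finset (List ℤ)) (n : ℕ) : ℕ :=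
  sSup {k : ℕ | ∃ C : Finset (List Bool),
    (∀ u ∈ C, u.length = n) ∧ AvoidsCode D C ∧ C.card = k}

/-- The capacity of a set of forbidden difference patterns. -/
noncomputable def cap (D : Finset (List ℤ)) : ℝ :=
  Filter.limsup (fun n : ℕ => Real.logb 2 (delta D n) / n) Filter.atTop

/- ### Auxiliary list lemmas -/

open List Filter

lemma prefix_append_cases {α : Type*} {p x y : List α} (h : p <+: x ++ y) :
    p <+: x ∨ ∃ t, p = x ++ t ∧ t <+: y := by
  by_cases hl : p.length ≤ x.length
  · exact Or.inl (List.prefix_of_prefix_length_le h (x.prefix_append y) hl)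
  · right
    have hx : x <+: p := List.prefix_of_prefix_length_le (x.prefix_append y) h (le_of_not_ge hl)
    obtain ⟨t, ht⟩ := hx
    obtain ⟨r, hr⟩ := h
    rw [← ht, List.append_assoc] at hr
    exact ⟨t, ht.symm, r, List.append_cancel_left hr⟩

lemma infix_append_cases {α : Type*} {p x y : List α} (h : p <:+: x ++ y) :
    p <:+: x ∨ p <:+: y ∨ ∃ s t, p = s ++ t ∧ s ≠ [] ∧ s <:+ x ∧ t <+: y := by
  induction x with
  | nil => exact Or.inr (Or.inl (by simpa using h))
  | cons a x' ih =>
    rw [List.cons_append, List.infix_cons_iff] at h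
    rcases h with hp | hi
    · rw [← List.cons_append] at hp
      rcases prefix_append_cases hp with h1 | ⟨t, h1, h2⟩
      · exact Or.inl h1.isInfix
      · exact Or.inr (Or.inr ⟨a :: x', t, h1, by simp, List.suffix_rfl, h2⟩)
    · rcases ih hi with h1 | h1 | ⟨s, t, h1, h2, h3, h4⟩
      · exact Or.inl (List.infix_cons h1)
      · exact Or.inr (Or.inl h1)
      · exact Or.inr (Or.inr ⟨s, t, h1, h2, h3.trans (List.suffix_cons a x'), h4⟩)

lemma prefix_replicate' {α : Type*} {t : List α} {k : ℕ} {x : α} (h : t <+: List.replicate k x) :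
    t = List.replicate t.length x :=
  List.eq_replicate_of_mem (fun _ hb => List.eq_of_mem_replicate (h.sublist.mem hb))

lemma suffix_replicate' {α : Type*} {t : List α} {k : ℕ} {x : α} (h : t <:+ List.replicate k x) :
    t = List.replicate t.length x :=
  List.eq_replicate_of_mem (fun _ hb => List.eq_of_mem_replicate (h.sublist.mem hb))

lemma infix_replicate' {α : Type*} {t : List α} {k : ℕ} {x : α} (h : t <:+: List.replicate k x) :
    t = List.replicate t.length x :=
  List.eq_replicate_of_mem (fun _ hb => List.eq_of_mem_replicate (h.sublist.mem hb))

lemma replicate_prefix_replicate' {α : Type*} {j k : ℕ} (x : α) (h : j ≤ k) :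
    List.replicate j x <+: List.replicate k x :=
  ⟨List.replicate (k - j) x, by rw [← List.replicate_add, Nat.add_sub_cancel' h]⟩

lemma exists_trailing_rev : ∀ (r : List ℤ), (∃ x ∈ r, x ≠ 0) →
    ∃ t c g, r = List.replicate t (0:ℤ) ++ c :: g ∧ c ≠ 0 := by
  intro r
  induction r with
  | nil => rintro ⟨x, hx, _⟩; simp at hx
  | cons a r' ih =>
    intro hx
    by_cases ha : a = 0
    · subst ha
      have : ∃ x ∈ r', x ≠ 0 := by
        rcases hx with ⟨x, hx1, hx2⟩
        rcases List.mem_cons.mp hx1 with h | h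
        · exact absurd h hx2
        · exact ⟨x, h, hx2⟩
      obtain ⟨t, c, g, h1, h2⟩ := ih this
      exact ⟨t + 1, c, g, by simp [List.replicate_succ, h1], h2⟩
    · exact ⟨0, a, r', by simp, ha⟩

lemma exists_trailing {d : List ℤ} (h : ∃ x ∈ d, x ≠ 0) :
    ∃ g c t, d = g ++ c :: List.replicate t (0:ℤ) ∧ c ≠ 0 := by
  obtain ⟨t, c, g, h1, h2⟩ := exists_trailing_rev d.reverse (by
    rcases h with ⟨x, hx1, hx2⟩; exact ⟨x, List.mem_reverse.mpr hx1, hx2⟩)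
  refine ⟨g.reverse, c, t, ?_, h2⟩
  have := congrArg List.reverse h1
  rw [List.reverse_reverse] at this
  rw [this]
  simp [List.reverse_append, List.reverse_replicate]

/- ### diffWord lemmas -/

lemma diffWord_length (u v : List Bool) : (diffWord u v).length = min u.length v.length := by
  simp [diffWord]

lemma diffWord_self : ∀ u : List Bool, diffWord u u = List.replicate u.length 0
  | [] => rfl
  | a :: u => by
    simp only [diffWord, List.zipWith_cons_cons, List.length_cons, List.replicate_succ]
    refine congrArg₂ _ (by ring) ?_
    simpa [diffWord] using diffWord_self u

lemma diffWord_neg : ∀ u v : List Bool, diffWord v u = (diffWord u v).map (fun x => -x)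
  | [], _ => by simp [diffWord]
  | _ :: _, [] => by simp [diffWord]
  | a :: u, b :: v => by
    simp only [diffWord, List.zipWith_cons_cons, List.map_cons]
    refine congrArg₂ _ (by ring) ?_
    simpa [diffWord] using diffWord_neg u v

lemma diffWord_mem : ∀ (u v : List Bool), ∀ x ∈ diffWord u v, x = -1 ∨ x = 0 ∨ x = 1
  | [], _ => by simp [diffWord]
  | _ :: _, [] => by simp [diffWord]
  | a :: u, b :: v => by
    intro x hx
    simp only [diffWord, List.zipWith_cons_cons, List.mem_cons] at hx
    rcases hx with h | h
    · subst h; cases a <;> cases b <;> simp [boolToInt]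
    · exact diffWord_mem u v x h

lemma diffWord_eq_zero : ∀ (u v : List Bool), u.length = v.length →
    diffWord u v = List.replicate u.length (0:ℤ) → u = v
  | [], [], _, _ => rfl
  | [], _ :: _, h, _ => by simp at h
  | _ :: _, [], h, _ => by simp at h
  | a :: u, b :: v, h, hz => by
    simp only [diffWord, List.zipWith_cons_cons, List.length_cons, List.replicate_succ,
      List.cons.injEq] at hz
    obtain ⟨h1, h2⟩ := hz
    have hab : a = b := by cases a <;> cases b <;> simp_all [boolToInt]
    rw [hab, diffWord_eq_zero u v (by simpa using h) h2]

/- ### The flattened-blocks factor lemma -/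

lemma join_factor {m : ℕ} {w : List ℤ} (hm : 1 ≤ m) (hpw : List.replicate m (0:ℤ) <+: w)
    (BS : List (List ℤ))
    (hB : ∀ B ∈ BS, (List.replicate m (0:ℤ) <+: B) ∧
          (∃ c, (c :: List.replicate (m-1) (0:ℤ)) <:+ B) ∧
          (∀ p, p <:+: B → p.length ≤ m → p <:+: w ∨ p <:+: w.map (fun x => -x))) :
    ∀ p, p <:+: BS.flatten → p.length ≤ m → p <:+: w ∨ p <:+: w.map (fun x => -x) := by
  induction BS with
  | nil =>
    intro p hp _
    left
    have : p = [] := by simpa using hp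
    simp [this]
  | cons B rest ih =>
    intro p hp hlp
    rw [List.flatten_cons] at hp
    rcases infix_append_cases hp with h1 | h1 | ⟨s, t, h1, h2, h3, h4⟩
    · exact (hB B (by simp)).2.2 p h1 hlp
    · exact ih (fun B' hB' => hB B' (by simp [hB'])) p h1 hlp
    · obtain ⟨c, hc⟩ := (hB B (by simp)).2.1
      have hlp' : p.length = s.length + t.length := by simp [h1]
      have hs1 : 1 ≤ s.length := List.length_pos_iff.mpr h2
      have hsm : s.length ≤ m := by omega
      have hs' : s <:+ (c :: List.replicate (m-1) (0:ℤ)) :=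
        List.suffix_of_suffix_length_le h3 hc (by simp; omega)
      have ht0 : t = List.replicate t.length (0:ℤ) := by
        cases rest with
        | nil =>
          have : t = [] := by simpa using h4
          simp [this]
        | cons B' rest' =>
          rw [List.flatten_cons] at h4
          have hpre : List.replicate m (0:ℤ) <+: B' ++ rest'.flatten :=
            (hB B' (by simp)).1.trans (List.prefix_append _ _)
          exact prefix_replicate'
            (List.prefix_of_prefix_length_le h4 hpre (by simp; omega))
      by_cases hsl : s.length = m
      · have hseq : s = c :: List.replicate (m-1) (0:ℤ) := hs'.eq_of_length (by simp; omega)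
        have htn : t = [] := List.length_eq_zero_iff.mp (by omega)
        have hps : p = s := by simp [h1, htn]
        exact (hB B (by simp)).2.2 p (hps ▸ h3.isInfix) hlp
      · have hs0 : s <:+ List.replicate (m-1) (0:ℤ) :=
          List.suffix_of_suffix_length_le hs' (List.suffix_cons c _) (by simp; omega)
        have hsrep : s = List.replicate s.length (0:ℤ) := suffix_replicate' hs0
        have hprep : p = List.replicate p.length (0:ℤ) := by
          conv_lhs => rw [h1, hsrep, ht0]
          rw [← List.replicate_add, hlp']
        left
        rw [hprep]
        exact ((replicate_prefix_replicate' (0:ℤ) hlp).trans hpw).isInfix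

/- ### The code construction from an admissible word -/

lemma diffWord_maps : ∀ (w : List ℤ), (∀ x ∈ w, x = -1 ∨ x = 0 ∨ x = 1) →
    diffWord (w.map fun x => decide (x = 1)) (w.map fun x => decide (x = -1)) = w
  | [], _ => rfl
  | x :: w, h => by
    simp only [List.map_cons, diffWord, List.zipWith_cons_cons]
    have hx := h x (by simp)
    refine congrArg₂ _ ?_ (diffWord_maps w (fun y hy => h y (by simp [hy])))
    rcases hx with h | h | h <;> subst h <;> simp [boolToInt]

lemma two_mul_le_length {m : ℕ} {w : List ℤ} (hm : 1 ≤ m)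
    (hpre : List.replicate m (0:ℤ) <+: w)
    (hsuf : (1:ℤ) :: List.replicate (m-1) (0:ℤ) <:+ w) : 2 * m ≤ w.length := by
  obtain ⟨pre, hpre_eq⟩ := hsuf
  obtain ⟨tail, htail⟩ := hpre
  subst hpre_eq
  have hlw : (pre ++ (1:ℤ) :: List.replicate (m-1) (0:ℤ)).length = pre.length + m := by
    simp; omega
  by_contra hcon
  have hplt : pre.length < m := by omega
  have hlt : pre.length < (pre ++ (1:ℤ) :: List.replicate (m-1) (0:ℤ)).length := by omega
  have h1 : (pre ++ (1:ℤ) :: List.replicate (m-1) (0:ℤ))[pre.length]'hlt = 1 := by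
    rw [List.getElem_append_right (le_refl _)]
    simp
  have hlt2 : pre.length < (List.replicate m (0:ℤ) ++ tail).length := by
    rw [htail]; omega
  have h0 : (List.replicate m (0:ℤ) ++ tail)[pre.length]'hlt2 = 0 := by
    rw [List.getElem_append_left (by simp; omega)]
    simp
  rw [List.getElem_of_eq htail] at h0
  rw [h1] at h0
  exact one_ne_zero h0

/-- The two binary words whose difference is `w`. -/
def wa (w : List ℤ) : List Bool := w.map fun x => decide (x = 1)
def wb (w : List ℤ) : List Bool := w.map fun x => decide (x = -1)

def Fenc (w : List ℤ) (s : List Bool) : List Bool :=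
  (s.map fun bit => if bit then wa w else wb w).flatten

lemma Fenc_cons {w : List ℤ} (bit : Bool) (s : List Bool) :
    Fenc w (bit :: s) = (if bit then wa w else wb w) ++ Fenc w s := by
  simp [Fenc]

lemma block_length {w : List ℤ} (bit : Bool) :
    (if bit then wa w else wb w).length = w.length := by
  cases bit <;> simp [wa, wb]

lemma Fenc_length {w : List ℤ} : ∀ s : List Bool, (Fenc w s).length = s.length * w.length
  | [] => by simp [Fenc]
  | bit :: s => by
    rw [Fenc_cons, List.length_append, block_length, Fenc_length s, List.length_cons]
    ring

lemma Fenc_diff {w : List ℤ} (hw : ∀ x ∈ w, x = -1 ∨ x = 0 ∨ x = 1) :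
    ∀ s t : List Bool, s.length = t.length →
    ∃ BS : List (List ℤ), diffWord (Fenc w s) (Fenc w t) = BS.flatten ∧
      ∀ B ∈ BS, B = w ∨ B = w.map (fun x => -x) ∨ B = List.replicate w.length 0
  | [], [], _ => ⟨[], rfl, by simp⟩
  | [], _ :: _, h => by simp at h
  | _ :: _, [], h => by simp at h
  | s0 :: s, t0 :: t, h => by
    obtain ⟨BS, hBS, hgood⟩ := Fenc_diff hw s t (by simpa using h)
    have hab : diffWord (wa w) (wb w) = w := diffWord_maps w hw
    have key : diffWord (Fenc w (s0 :: s)) (Fenc w (t0 :: t)) =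
        diffWord (if s0 then wa w else wb w) (if t0 then wa w else wb w)
          ++ diffWord (Fenc w s) (Fenc w t) := by
      rw [Fenc_cons, Fenc_cons]
      exact List.zipWith_append (by rw [block_length, block_length])
    refine ⟨diffWord (if s0 then wa w else wb w) (if t0 then wa w else wb w) :: BS,
      by rw [key, List.flatten_cons, hBS], ?_⟩
    intro B hB
    rcases List.mem_cons.mp hB with hB | hB
    · subst hB
      cases s0 <;> cases t0 <;> simp only [show ((true:Bool) = true) = True by simp,
        show ((false:Bool) = true) = False by simp, if_true, if_false]
      · right; right; rw [diffWord_self]; simp [wb]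
      · right; left; rw [diffWord_neg, hab]
      · left; exact hab
      · right; right; rw [diffWord_self]; simp [wa]
    · exact hgood B hB

lemma wa_ne_wb {m : ℕ} {w : List ℤ} (hw : ∀ x ∈ w, x = -1 ∨ x = 0 ∨ x = 1)
    (hsuf : (1:ℤ) :: List.replicate (m-1) (0:ℤ) <:+ w) : wa w ≠ wb w := by
  intro hab
  have h1 : (1:ℤ) ∈ w := hsuf.sublist.mem (by simp)
  have hD : diffWord (wa w) (wb w) = w := diffWord_maps w hw
  rw [hab, diffWord_self] at hD
  rw [← hD] at h1
  exact absurd (List.eq_of_mem_replicate h1) one_ne_zero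

lemma Fenc_inj {m : ℕ} {w : List ℤ} (hw : ∀ x ∈ w, x = -1 ∨ x = 0 ∨ x = 1)
    (hsuf : (1:ℤ) :: List.replicate (m-1) (0:ℤ) <:+ w) :
    ∀ s t : List Bool, s.length = t.length → Fenc w s = Fenc w t → s = t
  | [], [], _, _ => rfl
  | [], _ :: _, h, _ => by simp at h
  | _ :: _, [], h, _ => by simp at h
  | s0 :: s, t0 :: t, h, heq => by
    rw [Fenc_cons, Fenc_cons] at heq
    obtain ⟨h1, h2⟩ := List.append_inj heq (by rw [block_length, block_length])
    have hst : s0 = t0 := by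
      by_contra hne
      apply wa_ne_wb hw hsuf
      cases s0 <;> cases t0 <;> simp_all
    rw [hst, Fenc_inj (m := m) hw hsuf s t (by simpa using h) h2]

/- ### delta and cap basics -/

lemma ofFn_getD {u : List Bool} {n : ℕ} (h : u.length = n) :
    List.ofFn (fun i : Fin n => u.getD i false) = u := by
  apply List.ext_getElem (by simp [h])
  intro i h1 h2
  simp only [List.getElem_ofFn]
  exact List.getD_eq_getElem u false (by omega)

lemma code_card_le {n : ℕ} {C : Finset (List Bool)} (hC : ∀ u ∈ C, u.length = n) :
    C.card ≤ 2 ^ n := by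
  have hsub : C ⊆ Finset.image (fun f : Fin n → Bool => List.ofFn f) Finset.univ := by
    intro u hu
    exact Finset.mem_image.mpr ⟨fun i => u.getD i false, Finset.mem_univ _, ofFn_getD (hC u hu)⟩
  calc C.card ≤ _ := Finset.card_le_card hsub
    _ ≤ (Finset.univ : Finset (Fin n → Bool)).card := Finset.card_image_le
    _ = 2 ^ n := by simp

lemma delta_set_nonempty (D : Finset (List ℤ)) (n : ℕ) :
    1 ∈ {k : ℕ | ∃ C : Finset (List Bool),
      (∀ u ∈ C, u.length = n) ∧ AvoidsCode D C ∧ C.card = k} := by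
  refine ⟨{List.replicate n false}, ?_, ?_, by simp⟩
  · intro u hu; rw [Finset.mem_singleton] at hu; simp [hu]
  · intro u hu v hv hne
    rw [Finset.mem_singleton] at hu hv
    exact absurd (hu.trans hv.symm) hne

lemma delta_bddAbove (D : Finset (List ℤ)) (n : ℕ) :
    BddAbove {k : ℕ | ∃ C : Finset (List Bool),
      (∀ u ∈ C, u.length = n) ∧ AvoidsCode D C ∧ C.card = k} := by
  refine ⟨2 ^ n, fun k hk => ?_⟩
  obtain ⟨C, h1, _, h3⟩ := hk
  exact h3 ▸ code_card_le h1

lemma one_le_delta (D : Finset (List ℤ)) (n : ℕ) : 1 ≤ delta D n :=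
  le_csSup (delta_bddAbove D n) (delta_set_nonempty D n)

lemma delta_le_pow (D : Finset (List ℤ)) (n : ℕ) : delta D n ≤ 2 ^ n := by
  apply csSup_le ⟨1, delta_set_nonempty D n⟩
  rintro k ⟨C, h1, _, h3⟩
  exact h3 ▸ code_card_le h1

lemma f_nonneg (D : Finset (List ℤ)) (n : ℕ) :
    0 ≤ Real.logb 2 (delta D n) / n :=
  div_nonneg (Real.logb_nonneg one_lt_two (by exact_mod_cast one_le_delta D n)) (Nat.cast_nonneg n)

lemma f_le_one (D : Finset (List ℤ)) (n : ℕ) :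
    Real.logb 2 (delta D n) / n ≤ 1 := by
  rcases Nat.eq_zero_or_pos n with h | h
  · simp [h]
  · rw [div_le_one (by exact_mod_cast h)]
    calc Real.logb 2 (delta D n) ≤ Real.logb 2 ((2:ℝ) ^ n) := by
          apply Real.logb_le_logb_of_le one_lt_two
            (by exact_mod_cast one_le_delta D n)
          exact_mod_cast delta_le_pow D n
      _ = n := by rw [Real.logb_pow]; simp [Real.logb_self_eq_one]

lemma cap_pos_of_codes (D : Finset (List ℤ)) (L : ℕ) (hL : 1 ≤ L)
    (h : ∀ k : ℕ, 2 ^ k ≤ delta D (k * L)) : 0 < cap D := by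
  have hfreq : ∃ᶠ n in atTop, (1 : ℝ) / L ≤ Real.logb 2 (delta D n) / n := by
    rw [Filter.frequently_atTop]
    intro N
    refine ⟨(max N 1) * L, le_trans (le_max_left N 1) (Nat.le_mul_of_pos_right _ hL), ?_⟩
    set k := max N 1 with hk
    have hk1 : 1 ≤ k := le_max_right N 1
    have hdl : (2:ℝ) ^ k ≤ (delta D (k * L) : ℝ) := by exact_mod_cast h k
    have hlogb : (k : ℝ) ≤ Real.logb 2 (delta D (k * L)) := by
      calc (k : ℝ) = Real.logb 2 ((2:ℝ) ^ k) := by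
            rw [Real.logb_pow]; simp [Real.logb_self_eq_one]
        _ ≤ _ := Real.logb_le_logb_of_le one_lt_two (by positivity) hdl
    have hn : (0:ℝ) < (k * L : ℕ) := by positivity
    rw [le_div_iff₀ hn]
    calc (1:ℝ)/L * (k*L : ℕ) = k := by
          push_cast
          field_simp
    _ ≤ _ := hlogb
  have hb : IsBoundedUnder (· ≤ ·) atTop (fun n : ℕ => Real.logb 2 (delta D n) / n) :=
    ⟨1, Filter.eventually_map.mpr (Filter.Eventually.of_forall (f_le_one D))⟩
  have := Filter.le_limsup_of_frequently_le hfreq hb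
  have hpos : (0:ℝ) < 1 / L := by positivity
  exact lt_of_lt_of_le hpos this

lemma cap_not_pos_of_bounded (D : Finset (List ℤ)) (K : ℕ)
    (h : ∀ n, delta D n ≤ K) : ¬ (0 < cap D) := by
  intro hpos
  have hcb : IsCoboundedUnder (· ≤ ·) atTop (fun n : ℕ => Real.logb 2 (delta D n) / n) :=
    Filter.isCoboundedUnder_le_of_eventually_le atTop (x := 0)
      (Filter.Eventually.of_forall (f_nonneg D))
  have key : ∀ ε : ℝ, 0 < ε → cap D ≤ ε := by
    intro ε hε
    apply Filter.limsup_le_of_le hcb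
    rw [Filter.eventually_atTop]
    obtain ⟨N, hN⟩ := exists_nat_gt (Real.logb 2 K / ε)
    refine ⟨N + 1, fun n hn => ?_⟩
    have hn0 : (0:ℝ) < n := by exact_mod_cast Nat.lt_of_lt_of_le (Nat.succ_pos N) hn
    rw [div_le_iff₀ hn0]
    have h1 : Real.logb 2 (delta D n) ≤ Real.logb 2 K := by
      apply Real.logb_le_logb_of_le one_lt_two (by exact_mod_cast one_le_delta D n)
      exact_mod_cast h n
    have h2 : Real.logb 2 K / ε < n := by
      apply hN.trans_le
      have : N ≤ n := by omega
      exact_mod_cast this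
    calc Real.logb 2 (delta D n) ≤ Real.logb 2 K := h1
      _ ≤ ε * n := by
          rw [div_lt_iff₀ hε] at h2
          linarith [mul_comm ε (n:ℝ)]
  have := key (cap D / 2) (by linarith)
  linarith

/- ### The backward direction: no admissible word forces bounded codes -/

def Admissible (D : Finset (List ℤ)) (m : ℕ) (w : List ℤ) : Prop :=
  (∀ x ∈ w, x = -1 ∨ x = 0 ∨ x = 1) ∧
  List.replicate m (0:ℤ) <+: w ∧
  ((1:ℤ) :: List.replicate (m - 1) (0:ℤ)) <:+ w ∧
  ∀ p ∈ D, ¬ p <:+: w ∧ ¬ (p.map (fun x => -x)) <:+: w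

lemma no_escape {D : Finset (List ℤ)} {m : ℕ}
    (hno : ¬ ∃ w, Admissible D m w) (hm : 1 ≤ m) {n : ℕ} {u v : List Bool}
    (hmn : m ≤ n) (hu : u.length = n) (hv : v.length = n) (hne : u ≠ v)
    (havuv : ∀ p ∈ D, ¬ p <:+: diffWord u v) (havvu : ∀ p ∈ D, ¬ p <:+: diffWord v u)
    (htake : u.take m = v.take m) (hdrop : u.drop (n - (m-1)) = v.drop (n - (m-1))) :
    False := by
  set d := diffWord u v with hd
  have hd_len : d.length = n := by simp [hd, diffWord, hu, hv]
  have htake_d : d.take m = List.replicate m (0:ℤ) := by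
    rw [hd, diffWord, List.take_zipWith]
    show diffWord (u.take m) (v.take m) = _
    rw [htake, diffWord_self, List.length_take, hv, min_eq_left hmn]
  have hdrop_d : d.drop (n - (m-1)) = List.replicate (m-1) (0:ℤ) := by
    rw [hd, diffWord, List.drop_zipWith]
    show diffWord (u.drop (n - (m-1))) (v.drop (n - (m-1))) = _
    rw [hdrop, diffWord_self, List.length_drop, hv]
    congr 1
    omega
  have hd_ne : ∃ x ∈ d, x ≠ 0 := by
    by_contra hcon
    push_neg at hcon
    apply hne
    apply diffWord_eq_zero u v (hu.trans hv.symm)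
    rw [← hd, show u.length = d.length from hu.trans hd_len.symm]
    exact List.eq_replicate_of_mem hcon
  obtain ⟨g, c, t, hdeq, hc⟩ := exists_trailing hd_ne
  have hcd : c ∈ d := by rw [hdeq]; simp
  have htm : m - 1 ≤ t := by
    by_contra hcon
    push_neg at hcon
    have hsuf1 : c :: List.replicate t (0:ℤ) <:+ d := ⟨g, hdeq.symm⟩
    have hsuf2 : List.replicate (m-1) (0:ℤ) <:+ d := hdrop_d ▸ List.drop_suffix _ _
    have := List.suffix_of_suffix_length_le hsuf1 hsuf2 (by simp; omega)
    have hmem : c ∈ List.replicate (m-1) (0:ℤ) := this.sublist.mem (by simp)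
    exact hc (List.eq_of_mem_replicate hmem)
  set w0 : List ℤ := g ++ c :: List.replicate (m-1) (0:ℤ) with hw0
  have hdw0 : d = w0 ++ List.replicate (t - (m-1)) (0:ℤ) := by
    rw [hdeq, hw0]
    simp only [List.append_assoc, List.cons_append, List.append_cancel_left_eq,
      List.cons.injEq, true_and]
    rw [← List.replicate_add]
    congr 1
    omega
  have hw0_len : m ≤ w0.length := by rw [hw0]; simp; omega
  have hw0_pre : w0 <+: d := ⟨List.replicate (t - (m-1)) (0:ℤ), hdw0.symm⟩
  have hw0_inf : w0 <:+: d := hw0_pre.isInfix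
  have pre0 : List.replicate m (0:ℤ) <+: w0 :=
    List.prefix_of_prefix_length_le (htake_d ▸ List.take_prefix m d) hw0_pre
      (by simpa using hw0_len)
  have suf0 : c :: List.replicate (m-1) (0:ℤ) <:+ w0 := ⟨g, rfl⟩
  have mem0 : ∀ x ∈ w0, x = -1 ∨ x = 0 ∨ x = 1 := fun x hx =>
    diffWord_mem u v x (hw0_inf.sublist.mem hx)
  have avoid_d_neg : ∀ p ∈ D, ¬ (p.map (fun x => -x)) <:+: d := by
    intro p hp h
    have h2 := h.map (fun x => -x)
    rw [List.map_map] at h2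
    simp only [Function.comp_def, neg_neg, List.map_id'] at h2
    rw [← diffWord_neg] at h2
    exact havvu p hp h2
  have avoid_w0 : ∀ p ∈ D, ¬ p <:+: w0 ∧ ¬ (p.map (fun x => -x)) <:+: w0 := fun p hp =>
    ⟨fun h => havuv p hp (h.trans hw0_inf), fun h => avoid_d_neg p hp (h.trans hw0_inf)⟩
  rcases diffWord_mem u v c hcd with hc1 | hc1 | hc1
  · -- c = -1 : use the negated word
    apply hno
    refine ⟨w0.map (fun x => -x), ?_, ?_, ?_, ?_⟩
    · rintro x hx
      obtain ⟨y, hy, rfl⟩ := List.mem_map.mp hx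
      rcases mem0 y hy with h | h | h <;> subst h <;> norm_num
    · have := pre0.map (fun x => -x)
      simpa using this
    · have := suf0.map (fun x => -x)
      rw [hc1] at this
      simpa using this
    · intro p hp
      constructor
      · intro h
        exact (avoid_w0 p hp).2 (by
          have := h.map (fun x => -x)
          rw [List.map_map] at this
          simp only [Function.comp_def, neg_neg] at this
          simpa using this)
      · intro h
        have h2 := h.map (fun x => -x)
        rw [List.map_map, List.map_map] at h2
        simp only [Function.comp_def, neg_neg, List.map_id'] at h2
        exact (avoid_w0 p hp).1 h2
  · exact hc hc1
  · -- c = 1 : w0 itself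
    exact hno ⟨w0, mem0, pre0, hc1 ▸ suf0, avoid_w0⟩

lemma card_le_of_no_admissible {D : Finset (List ℤ)} {m : ℕ}
    (hno : ¬ ∃ w, Admissible D m w) (hm : 1 ≤ m)
    {n : ℕ} {C : Finset (List Bool)} (hlen : ∀ u ∈ C, u.length = n)
    (hav : AvoidsCode D C) : C.card ≤ 2 ^ (2 * m) := by
  classical
  set Φ : List Bool → (Fin m → Bool) × (Fin m → Bool) :=
    fun u => (fun i => (u.take m).getD i false,
              fun i => (u.drop (n - (m-1))).getD i false) with hΦ
  have hinj : Set.InjOn Φ C := by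
    intro u hu v hv heq
    by_contra hne
    have htl : (u.take m).length = (v.take m).length := by
      simp [hlen u hu, hlen v hv]
    have htake : u.take m = v.take m := by
      apply List.ext_getElem htl
      intro i h1 h2
      have hi : i < m := lt_of_lt_of_le h1 (by simp)
      have h3 := congrFun (congrArg Prod.fst heq) ⟨i, hi⟩
      simp only [Φ] at h3
      rw [← List.getD_eq_getElem (u.take m) false h1,
        ← List.getD_eq_getElem (v.take m) false h2]
      exact h3
    have hdl : (u.drop (n - (m-1))).length = (v.drop (n - (m-1))).length := by
      simp [hlen u hu, hlen v hv]
    have hdrop : u.drop (n - (m-1)) = v.drop (n - (m-1)) := by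
      apply List.ext_getElem hdl
      intro i h1 h2
      have hi : i < m := by
        have := h1
        rw [List.length_drop, hlen u hu] at this
        omega
      have h3 := congrFun (congrArg Prod.snd heq) ⟨i, hi⟩
      simp only [Φ] at h3
      rw [← List.getD_eq_getElem (u.drop (n - (m-1))) false h1,
        ← List.getD_eq_getElem (v.drop (n - (m-1))) false h2]
      exact h3
    by_cases hmn : m ≤ n
    · exact no_escape hno hm hmn (hlen u hu) (hlen v hv) hne
        (hav u hu v hv hne) (hav v hv u hu (Ne.symm hne)) htake hdrop
    · apply hne
      rw [← List.take_of_length_le (show u.length ≤ m by rw [hlen u hu]; omega),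
        ← List.take_of_length_le (show v.length ≤ m by rw [hlen v hv]; omega)]
      exact htake
  calc C.card ≤ (Finset.univ : Finset ((Fin m → Bool) × (Fin m → Bool))).card :=
        Finset.card_le_card_of_injOn Φ (fun _ _ => Finset.mem_univ _) hinj
    _ = 2 ^ (2 * m) := by simp [two_mul, pow_add]

lemma delta_le_const {D : Finset (List ℤ)} {m : ℕ}
    (hno : ¬ ∃ w, Admissible D m w) (hm : 1 ≤ m) (n : ℕ) :
    delta D n ≤ 2 ^ (2 * m) := by
  apply csSup_le ⟨1, delta_set_nonempty D n⟩
  rintro k ⟨C, h1, h2, h3⟩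
  exact h3 ▸ card_le_of_no_admissible hno hm h1 h2

/- ### Main theorem -/

/-- `cap(D) > 0` iff there is a word over `{-1,0,+1}` with prefix `0^m`,
suffix `+0^{m-1}`, containing no element of `D ∪ (-D)` as a factor. -/
theorem positive_capacity_iff_admissible_word (D : Finset (List ℤ))
    (hD : ∀ p ∈ D, IsPattern p) (m : ℕ) (hm : 1 ≤ m) (hlen : ∀ p ∈ D, p.length ≤ m) :
    0 < cap D ↔ ∃ w : List ℤ,
      (∀ x ∈ w, x = -1 ∨ x = 0 ∨ x = 1) ∧
      List.replicate m (0:ℤ) <+: w ∧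
      ((1:ℤ) :: List.replicate (m - 1) (0:ℤ)) <:+ w ∧
      ∀ p ∈ D, ¬ p <:+: w ∧ ¬ (p.map (fun x => -x)) <:+: w := by
  constructor
  · intro hpos
    by_contra hno
    have hno' : ¬ ∃ w, Admissible D m w := hno
    exact cap_not_pos_of_bounded D (2 ^ (2*m)) (delta_le_const hno' hm) hpos
  · rintro ⟨w, hmem, hpre, hsuf, havoid⟩
    have hL2 : 2 * m ≤ w.length := two_mul_le_length hm hpre hsuf
    have hL1 : 1 ≤ w.length := by omega
    have hmL : m ≤ w.length := by omega
    -- the three kinds of blocks are all good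
    have hgoodw : ∀ B : List ℤ,
        B = w ∨ B = w.map (fun x => -x) ∨ B = List.replicate w.length 0 →
        (List.replicate m (0:ℤ) <+: B) ∧
        (∃ c, (c :: List.replicate (m-1) (0:ℤ)) <:+ B) ∧
        (∀ p, p <:+: B → p.length ≤ m → p <:+: w ∨ p <:+: w.map (fun x => -x)) := by
      rintro B (rfl | rfl | rfl)
      · exact ⟨hpre, ⟨1, hsuf⟩, fun p h _ => Or.inl h⟩
      · refine ⟨by simpa using hpre.map (fun x => -x),
          ⟨-1, by simpa using hsuf.map (fun x => -x)⟩,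
          fun p h _ => Or.inr h⟩
      · refine ⟨replicate_prefix_replicate' (0:ℤ) hmL, ⟨0, ?_⟩, ?_⟩
        · have : (0:ℤ) :: List.replicate (m-1) (0:ℤ) = List.replicate m (0:ℤ) := by
            rw [← List.replicate_succ]
            congr 1
            omega
          rw [this]
          exact ⟨List.replicate (w.length - m) (0:ℤ), by
            rw [← List.replicate_add]; congr 1; omega⟩
        · intro p hp hlp
          left
          rw [infix_replicate' hp]
          exact ((replicate_prefix_replicate' (0:ℤ) hlp).trans hpre).isInfix
    apply cap_pos_of_codes D w.length hL1
    intro k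
    apply le_csSup (delta_bddAbove D (k * w.length))
    refine ⟨Finset.image (fun f : Fin k → Bool => Fenc w (List.ofFn f)) Finset.univ,
      ?_, ?_, ?_⟩
    · intro u hu
      obtain ⟨f, _, rfl⟩ := Finset.mem_image.mp hu
      rw [Fenc_length, List.length_ofFn]
    · intro u hu v hv hne p hp hinf
      obtain ⟨f, _, rfl⟩ := Finset.mem_image.mp hu
      obtain ⟨g, _, rfl⟩ := Finset.mem_image.mp hv
      obtain ⟨BS, hBS, hB⟩ := Fenc_diff hmem (List.ofFn f) (List.ofFn g) (by simp)
      rw [hBS] at hinf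
      rcases join_factor hm hpre BS (fun B hB' => hgoodw B (hB B hB')) p hinf (hlen p hp)
        with h | h
      · exact (havoid p hp).1 h
      · apply (havoid p hp).2
        have := h.map (fun x => -x)
        rw [List.map_map] at this
        simpa [Function.comp_def, neg_neg] using this
    · rw [Finset.card_image_of_injective _ ?_, Finset.card_univ]
      · simp
      · intro f g hfg
        apply List.ofFn_injective
        exact Fenc_inj (m := m) hmem hsuf _ _ (by simp) hfg
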